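/- If a permutation p of length n-1 is sortable by t-1 stacks in series (by some sequence of legal moves), then inserting the value n into any position of p yields a permutation of length n that is sortable by t stacks in series. -/

import Mathlib

/-- A configuration for sorting with `t` stacks in series: the remaining input,
the stacks (index `0` is the leftmost, next to the output; index `t-1` is the
rightmost, next to the input; the head of each list is the top of the stack),
and the output produced so far. -/
structure Conf where
  input : List ℕ
  stks : List (List ℕ)
  output : List ℕ
deriving DecidableEq, Repr

/-- `x` may be placed on top of a stack iff the stack is empty or `x` is smaller
than the current top (stacks are increasing from top to bottom). -/
def canPush (x : ℕ) : List ℕ → Bool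
  | [] => true
  | y :: _ => decide (x < y)

/-- Moves, ordered left to right: `0` = pop the leftmost stack to the output
(legal only for the next element of the identity); `m` with `0 < m < t` = move the
top of stack `m` one stack to the left; `t` = push the next input element onto the
rightmost stack. -/
def legal (t : ℕ) (c : Conf) (m : ℕ) : Bool :=
  if m = 0 then
    match c.stks.getD 0 [] with
    | x :: _ => x == c.output.length + 1
    | [] => false
  else if m < t then
    match c.stks.getD m [] with
    | x :: _ => canPush x (c.stks.getD (m-1) [])
    | [] => false
  else if m = t then
    match c.input with
    | x :: _ => canPush x (c.stks.getD (t-1) [])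
    | [] => false
  else false

/-- Perform move `m` on configuration `c` (with `t` stacks). -/
def applyMove (t : ℕ) (c : Conf) (m : ℕ) : Conf :=
  if m = 0 then
    match c.stks.getD 0 [] with
    | x :: s => ⟨c.input, c.stks.set 0 s, c.output ++ [x]⟩
    | [] => c
  else if m < t then
    match c.stks.getD m [] with
    | x :: s => ⟨c.input, (c.stks.set m s).set (m-1) (x :: c.stks.getD (m-1) []), c.output⟩
    | [] => c
  else
    match c.input with
    | x :: rest => ⟨rest, c.stks.set (t-1) (x :: c.stks.getD (t-1) []), c.output⟩
    | [] => c

def initConf (t : ℕ) (p : List ℕ) : Conf := ⟨p, List.replicate t [], []⟩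

/-- The fully sorted configuration: empty input and stacks, output `1,2,...,n`. -/
def finalConf (t n : ℕ) : Conf := ⟨[], List.replicate t [], List.range' 1 n⟩

/-- Run a sequence of moves, requiring each to be legal. -/
def runLegal (t : ℕ) : Conf → List ℕ → Option Conf
  | c, [] => some c
  | c, m :: ms => if legal t c m then runLegal t (applyMove t c m) ms else none

/-- `p` is sortable by `t` stacks in series by some sequence of legal moves. -/
def Sortable (t : ℕ) (p : List ℕ) : Prop :=
  ∃ ms : List ℕ, runLegal t (initConf t p) ms = some (finalConf t p.length)

/-- The leftmost legal move, if any. -/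
def leftMove (t : ℕ) (c : Conf) : Option ℕ :=
  ((List.range (t+1)).filter (fun m => legal t c m)).head?

/-- The rightmost legal move, if any. -/
def rightMove (t : ℕ) (c : Conf) : Option ℕ :=
  ((List.range (t+1)).filter (fun m => legal t c m)).getLast?

/-- One step of a greedy algorithm given by the move selector `mv`
(the configuration is unchanged if no move is legal, i.e. the algorithm fails or is done). -/
def greedyStep (mv : ℕ → Conf → Option ℕ) (t : ℕ) (c : Conf) : Conf :=
  match mv t c with
  | some m => applyMove t c m
  | none => c

/-- The greedy algorithm given by `mv` sorts `p` with `t` stacks in series. -/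
def GreedySorts (mv : ℕ → Conf → Option ℕ) (t : ℕ) (p : List ℕ) : Prop :=
  ∃ k : ℕ, (greedyStep mv t)^[k] (initConf t p) = finalConf t p.length

def LeftGreedySorts : ℕ → List ℕ → Prop := GreedySorts leftMove
def RightGreedySorts : ℕ → List ℕ → Prop := GreedySorts rightMove

/-- `p` is a permutation of `1,...,n` (as a list). -/
def IsPermOf (n : ℕ) (p : List ℕ) : Prop := p.Perm (List.range' 1 n)

/-- The position of the element `x` in configuration `c`: `0` if in the output
(furthest left), `j+1` if in stack `j`, `t+1` if still in the input (furthest right). -/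
def posOf (t : ℕ) (c : Conf) (x : ℕ) : ℕ :=
  if x ∈ c.output then 0
  else match (List.range t).find? (fun j => decide (x ∈ c.stks.getD j [])) with
    | some j => j + 1
    | none => t + 1

/-- `c` is at the `i`-th critical moment for the greedy algorithm `mv` on a
permutation of length `n`: either the chosen move is the entry of the `i`-th
element into the stacks, or the algorithm fails (no legal move, incomplete output). -/
def IsCrit (mv : ℕ → Conf → Option ℕ) (t i n : ℕ) (c : Conf) : Prop :=
  (c.input.length + i = n + 1 ∧ mv t c = some t) ∨
  (mv t c = none ∧ c.output.length < n)

/-- `c` is the configuration at the `i`-th critical moment of the greedy algorithm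
`mv` run on `p` (the first moment along the run satisfying `IsCrit`). -/
def CritConf (mv : ℕ → Conf → Option ℕ) (t i n : ℕ) (p : List ℕ) (c : Conf) : Prop :=
  ∃ k : ℕ, (greedyStep mv t)^[k] (initConf t p) = c ∧ IsCrit mv t i n c ∧
    ∀ k' < k, ¬ IsCrit mv t i n ((greedyStep mv t)^[k'] (initConf t p))

/-- No stack is empty while some stack to its right is nonempty. -/
def NoGap (t : ℕ) (c : Conf) : Prop :=
  ∀ j j' : ℕ, j < j' → j' < t → c.stks.getD j' [] ≠ [] → c.stks.getD j [] ≠ []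

/-- `r` contains `q` as a pattern. -/
def ContainsPat (r q : List ℕ) : Prop :=
  ∃ f : Fin q.length → Fin r.length, StrictMono f ∧
    ∀ a b : Fin q.length, q.get a < q.get b ↔ r.get (f a) < r.get (f b)

section StackAux

lemma getD_append_lt (l : List (List ℕ)) (b : List ℕ) {m : ℕ} (h : m < l.length) :
    (l ++ [b]).getD m [] = l.getD m [] := by
  simp [List.getD_eq_getElem?_getD, List.getElem?_append_left h]

lemma getD_append_len (l : List (List ℕ)) (b : List ℕ) {m : ℕ} (h : m = l.length) :
    (l ++ [b]).getD m [] = b := by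
  subst h
  simp [List.getD_eq_getElem?_getD, List.getElem?_append_right (le_refl _)]

lemma set_append_lt (l : List (List ℕ)) (b v : List ℕ) {m : ℕ} (h : m < l.length) :
    (l ++ [b]).set m v = l.set m v ++ [b] := List.set_append_left _ _ h

lemma set_append_len (l : List (List ℕ)) (b v : List ℕ) {m : ℕ} (h : m = l.length) :
    (l ++ [b]).set m v = l ++ [v] := by
  subst h
  rw [List.set_append_right _ _ (le_refl _)]
  simp

lemma getD_set_self (l : List (List ℕ)) (m : ℕ) (b : List ℕ) (h : m < l.length) :
    (l.set m b).getD m [] = b := by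
  simp [List.getD_eq_getElem?_getD, List.getElem?_set_self h]

lemma getD_set_ne (l : List (List ℕ)) {m k : ℕ} (b : List ℕ) (h : m ≠ k) :
    (l.set m b).getD k [] = l.getD k [] := by
  simp [List.getD_eq_getElem?_getD, List.getElem?_set_ne h]

lemma getD_replicate_nil (t k : ℕ) :
    (List.replicate t ([] : List ℕ)).getD k [] = [] := by
  simp [List.getD_eq_getElem?_getD, List.getElem?_replicate]
  split <;> rfl

lemma set_replicate_nil (t m : ℕ) :
    (List.replicate t ([] : List ℕ)).set m [] = List.replicate t [] := by
  induction t generalizing m with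
  | zero => rfl
  | succ t ih =>
    cases m with
    | zero => simp [List.replicate_succ]
    | succ m => simp [List.replicate_succ, ih]

lemma runLegal_append (t : ℕ) (xs ys : List ℕ) : ∀ c : Conf,
    runLegal t c (xs ++ ys) = (runLegal t c xs).bind fun d => runLegal t d ys := by
  induction xs with
  | nil => intro c; simp [runLegal]
  | cons m xs ih =>
    intro c
    simp only [List.cons_append, runLegal]
    split
    · exact ih _
    · simp

lemma simAfter (s n : ℕ) (hs : 1 ≤ s) : ∀ (ms : List ℕ) (c d : Conf),
    c.stks.length = s → (∀ x ∈ c.input, x < n) →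
    runLegal s c ms = some d →
    ∃ ms', runLegal (s+1) ⟨c.input, c.stks ++ [[n]], c.output⟩ ms' =
      some ⟨d.input, d.stks ++ [[n]], d.output⟩ := by
  intro ms
  induction ms with
  | nil =>
    intro c d hlen hin h
    simp only [runLegal, Option.some.injEq] at h
    subst h
    exact ⟨[], rfl⟩
  | cons m ms ih =>
    intro c d hlen hin h
    rw [runLegal] at h
    split at h
    case isFalse => exact absurd h (by simp)
    case isTrue hleg =>
    by_cases hm0 : m = 0
    · subst hm0
      rw [legal, if_pos rfl] at hleg
      cases h0 : c.stks.getD 0 [] with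
      | nil => rw [h0] at hleg; exact absurd hleg (by simp)
      | cons x s0 =>
        rw [h0] at hleg
        have hE : applyMove s c 0 = ⟨c.input, c.stks.set 0 s0, c.output ++ [x]⟩ := by
          rw [applyMove, if_pos rfl, h0]
        rw [hE] at h
        obtain ⟨ms', hms'⟩ := ih ⟨c.input, c.stks.set 0 s0, c.output ++ [x]⟩ d
          (by simp [hlen]) hin h
        refine ⟨0 :: ms', ?_⟩
        rw [runLegal]
        have h0' : (c.stks ++ [[n]]).getD 0 [] = x :: s0 := by
          rw [getD_append_lt _ _ (by omega), h0]
        have hL : legal (s+1) ⟨c.input, c.stks ++ [[n]], c.output⟩ 0 = true := by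
          rw [legal, if_pos rfl]
          simp only [h0']
          simpa using hleg
        rw [if_pos hL, applyMove, if_pos rfl]
        simp only [h0']
        rw [set_append_lt _ _ _ (by omega)]
        exact hms'
    · by_cases hms : m < s
      · rw [legal, if_neg hm0, if_pos hms] at hleg
        cases hm' : c.stks.getD m [] with
        | nil => rw [hm'] at hleg; exact absurd hleg (by simp)
        | cons x sm =>
          rw [hm'] at hleg
          have hE : applyMove s c m = ⟨c.input,
              (c.stks.set m sm).set (m-1) (x :: c.stks.getD (m-1) []), c.output⟩ := by
            rw [applyMove, if_neg hm0, if_pos hms, hm']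
          rw [hE] at h
          obtain ⟨ms', hms'⟩ := ih ⟨c.input,
            (c.stks.set m sm).set (m-1) (x :: c.stks.getD (m-1) []), c.output⟩ d
            (by simp [hlen]) hin h
          refine ⟨m :: ms', ?_⟩
          rw [runLegal]
          have hg1 : (c.stks ++ [[n]]).getD m [] = x :: sm := by
            rw [getD_append_lt _ _ (by omega), hm']
          have hg2 : (c.stks ++ [[n]]).getD (m-1) [] = c.stks.getD (m-1) [] :=
            getD_append_lt _ _ (by omega)
          have hL : legal (s+1) ⟨c.input, c.stks ++ [[n]], c.output⟩ m = true := by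
            rw [legal, if_neg hm0, if_pos (by omega : m < s+1)]
            simp only [hg1, hg2]
            exact hleg
          rw [if_pos hL, applyMove, if_neg hm0, if_pos (by omega : m < s+1)]
          simp only [hg1, hg2]
          rw [set_append_lt _ _ _ (by omega), set_append_lt _ _ _ (by simp; omega)]
          exact hms'
      · by_cases hmt : m = s
        · have hmt2 : s = m := hmt.symm
          subst hmt2
          rw [legal, if_neg hm0, if_neg hms, if_pos rfl] at hleg
          cases hi' : c.input with
          | nil => rw [hi'] at hleg; exact absurd hleg (by simp)
          | cons x rest =>
            rw [hi'] at hleg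
            have hxlt : x < n := hin x (by rw [hi']; exact List.mem_cons_self)
            have hE : applyMove s c s =
                ⟨rest, c.stks.set (s-1) (x :: c.stks.getD (s-1) []), c.output⟩ := by
              rw [applyMove, if_neg hm0, if_neg hms, hi']
            rw [hE] at h
            obtain ⟨ms', hms'⟩ := ih ⟨rest, c.stks.set (s-1) (x :: c.stks.getD (s-1) []),
              c.output⟩ d (by simp [hlen])
              (fun y hy => hin y (by rw [hi']; exact List.mem_cons_of_mem _ hy)) h
            refine ⟨(s+1) :: s :: ms', ?_⟩
            rw [runLegal]
            have hgs : (c.stks ++ [[n]]).getD s [] = [n] := getD_append_len _ _ hlen.symm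
            have hL1 : legal (s+1) ⟨x :: rest, c.stks ++ [[n]], c.output⟩ (s+1) = true := by
              rw [legal, if_neg (by omega), if_neg (by omega), if_pos rfl]
              simp only [Nat.add_sub_cancel, hgs, canPush]
              simp [hxlt]
            rw [if_pos hL1]
            have hA1 : applyMove (s+1) ⟨x :: rest, c.stks ++ [[n]], c.output⟩ (s+1) =
                ⟨rest, c.stks ++ [[x, n]], c.output⟩ := by
              rw [applyMove, if_neg (by omega), if_neg (by omega)]
              simp only [Nat.add_sub_cancel, hgs]
              rw [set_append_len _ _ _ hlen.symm]
            rw [hA1, runLegal]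
            have hgs2 : (c.stks ++ [[x, n]]).getD s [] = [x, n] := getD_append_len _ _ hlen.symm
            have hgs3 : (c.stks ++ [[x, n]]).getD (s-1) [] = c.stks.getD (s-1) [] :=
              getD_append_lt _ _ (by omega)
            have hL2 : legal (s+1) ⟨rest, c.stks ++ [[x, n]], c.output⟩ s = true := by
              rw [legal, if_neg hm0, if_pos (by omega : s < s+1)]
              simp only [hgs2, hgs3]
              exact hleg
            rw [if_pos hL2]
            have hA2 : applyMove (s+1) ⟨rest, c.stks ++ [[x, n]], c.output⟩ s =
                ⟨rest, c.stks.set (s-1) (x :: c.stks.getD (s-1) []) ++ [[n]], c.output⟩ := by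
              rw [applyMove, if_neg hm0, if_pos (by omega : s < s+1)]
              simp only [hgs2, hgs3]
              rw [set_append_len _ _ _ hlen.symm, set_append_lt _ _ _ (by omega)]
            rw [hA2]
            exact hms'
        · exfalso
          rw [legal, if_neg hm0, if_neg hms, if_neg hmt] at hleg
          exact absurd hleg (by simp)

lemma simBefore (s n : ℕ) (hs : 1 ≤ s) : ∀ (ms : List ℕ) (c d : Conf) (j : ℕ),
    j ≤ c.input.length → c.stks.length = s → (∀ x ∈ c.input, x < n) →
    runLegal s c ms = some d → d.input = [] →
    ∃ ms', runLegal (s+1)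
      ⟨c.input.take j ++ n :: c.input.drop j, c.stks ++ [[]], c.output⟩ ms' =
      some ⟨[], d.stks ++ [[n]], d.output⟩ := by
  intro ms
  induction ms with
  | nil =>
    intro c d j hj hlen hin h hd
    simp only [runLegal, Option.some.injEq] at h
    subst h
    have hci : c.input = [] := hd
    have hj0 : j = 0 := by rw [hci] at hj; simpa using hj
    subst hj0
    refine ⟨[s+1], ?_⟩
    rw [runLegal]
    have hgs : (c.stks ++ [[]]).getD s [] = [] := getD_append_len _ _ hlen.symm
    have hL : legal (s+1) ⟨c.input.take 0 ++ n :: c.input.drop 0, c.stks ++ [[]],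
        c.output⟩ (s+1) = true := by
      rw [legal, if_neg (by omega), if_neg (by omega), if_pos rfl]
      simp only [List.take_zero, List.nil_append, Nat.add_sub_cancel, hgs, canPush]
    rw [if_pos hL, applyMove, if_neg (by omega), if_neg (by omega)]
    simp only [List.take_zero, List.nil_append, List.drop_zero, Nat.add_sub_cancel, hgs]
    rw [set_append_len _ _ _ hlen.symm, runLegal]
    rw [hci]
  | cons m ms ih =>
    intro c d j hj hlen hin h hd
    cases j with
    | zero =>
      obtain ⟨ms', hms'⟩ := simAfter s n hs (m :: ms) c d hlen hin h
      refine ⟨(s+1) :: ms', ?_⟩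
      rw [runLegal]
      have hgs : (c.stks ++ [[]]).getD s [] = [] := getD_append_len _ _ hlen.symm
      have hL : legal (s+1) ⟨c.input.take 0 ++ n :: c.input.drop 0, c.stks ++ [[]],
          c.output⟩ (s+1) = true := by
        rw [legal, if_neg (by omega), if_neg (by omega), if_pos rfl]
        simp only [List.take_zero, List.nil_append, Nat.add_sub_cancel, hgs, canPush]
      rw [if_pos hL, applyMove, if_neg (by omega), if_neg (by omega)]
      simp only [List.take_zero, List.nil_append, List.drop_zero, Nat.add_sub_cancel, hgs]
      rw [set_append_len _ _ _ hlen.symm]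
      rw [hd] at hms'
      exact hms'
    | succ j' =>
      rw [runLegal] at h
      split at h
      case isFalse => exact absurd h (by simp)
      case isTrue hleg =>
      by_cases hm0 : m = 0
      · subst hm0
        rw [legal, if_pos rfl] at hleg
        cases h0 : c.stks.getD 0 [] with
        | nil => rw [h0] at hleg; exact absurd hleg (by simp)
        | cons x s0 =>
          rw [h0] at hleg
          have hE : applyMove s c 0 = ⟨c.input, c.stks.set 0 s0, c.output ++ [x]⟩ := by
            rw [applyMove, if_pos rfl, h0]
          rw [hE] at h
          obtain ⟨ms', hms'⟩ := ih ⟨c.input, c.stks.set 0 s0, c.output ++ [x]⟩ d (j'+1) hj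
            (by simp [hlen]) hin h hd
          refine ⟨0 :: ms', ?_⟩
          rw [runLegal]
          have h0' : (c.stks ++ [[]]).getD 0 [] = x :: s0 := by
            rw [getD_append_lt _ _ (by omega), h0]
          have hL : legal (s+1) ⟨c.input.take (j'+1) ++ n :: c.input.drop (j'+1),
              c.stks ++ [[]], c.output⟩ 0 = true := by
            rw [legal, if_pos rfl]
            simp only [h0']
            simpa using hleg
          rw [if_pos hL, applyMove, if_pos rfl]
          simp only [h0']
          rw [set_append_lt _ _ _ (by omega)]
          exact hms'
      · by_cases hms : m < s
        · rw [legal, if_neg hm0, if_pos hms] at hleg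
          cases hm' : c.stks.getD m [] with
          | nil => rw [hm'] at hleg; exact absurd hleg (by simp)
          | cons x sm =>
            rw [hm'] at hleg
            have hE : applyMove s c m = ⟨c.input,
                (c.stks.set m sm).set (m-1) (x :: c.stks.getD (m-1) []), c.output⟩ := by
              rw [applyMove, if_neg hm0, if_pos hms, hm']
            rw [hE] at h
            obtain ⟨ms', hms'⟩ := ih ⟨c.input,
              (c.stks.set m sm).set (m-1) (x :: c.stks.getD (m-1) []), c.output⟩ d
              (j'+1) hj (by simp [hlen]) hin h hd
            refine ⟨m :: ms', ?_⟩
            rw [runLegal]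
            have hg1 : (c.stks ++ [[]]).getD m [] = x :: sm := by
              rw [getD_append_lt _ _ (by omega), hm']
            have hg2 : (c.stks ++ [[]]).getD (m-1) [] = c.stks.getD (m-1) [] :=
              getD_append_lt _ _ (by omega)
            have hL : legal (s+1) ⟨c.input.take (j'+1) ++ n :: c.input.drop (j'+1),
                c.stks ++ [[]], c.output⟩ m = true := by
              rw [legal, if_neg hm0, if_pos (by omega : m < s+1)]
              simp only [hg1, hg2]
              exact hleg
            rw [if_pos hL, applyMove, if_neg hm0, if_pos (by omega : m < s+1)]
            simp only [hg1, hg2]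
            rw [set_append_lt _ _ _ (by omega), set_append_lt _ _ _ (by simp; omega)]
            exact hms'
        · by_cases hmt : m = s
          · have hmt2 : s = m := hmt.symm
            subst hmt2
            rw [legal, if_neg hm0, if_neg hms, if_pos rfl] at hleg
            cases hi' : c.input with
            | nil => rw [hi'] at hleg; exact absurd hleg (by simp)
            | cons x rest =>
              rw [hi'] at hleg
              have hE : applyMove s c s =
                  ⟨rest, c.stks.set (s-1) (x :: c.stks.getD (s-1) []), c.output⟩ := by
                rw [applyMove, if_neg hm0, if_neg hms, hi']
              rw [hE] at h
              have hj' : j' ≤ rest.length := by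
                rw [hi'] at hj; simpa using hj
              obtain ⟨ms', hms'⟩ := ih ⟨rest, c.stks.set (s-1) (x :: c.stks.getD (s-1) []),
                c.output⟩ d j' hj' (by simp [hlen])
                (fun y hy => hin y (by rw [hi']; exact List.mem_cons_of_mem _ hy)) h hd
              refine ⟨(s+1) :: s :: ms', ?_⟩
              simp only [List.take_succ_cons, List.drop_succ_cons, List.cons_append]
              rw [runLegal]
              have hgs : (c.stks ++ [[]]).getD s [] = [] := getD_append_len _ _ hlen.symm
              have hL1 : legal (s+1) ⟨x :: (rest.take j' ++ n :: rest.drop j'),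
                  c.stks ++ [[]], c.output⟩ (s+1) = true := by
                rw [legal, if_neg (by omega), if_neg (by omega), if_pos rfl]
                simp only [Nat.add_sub_cancel, hgs, canPush]
              rw [if_pos hL1]
              have hA1 : applyMove (s+1) ⟨x :: (rest.take j' ++ n :: rest.drop j'),
                  c.stks ++ [[]], c.output⟩ (s+1) =
                  ⟨rest.take j' ++ n :: rest.drop j', c.stks ++ [[x]], c.output⟩ := by
                rw [applyMove, if_neg (by omega), if_neg (by omega)]
                simp only [Nat.add_sub_cancel, hgs]
                rw [set_append_len _ _ _ hlen.symm]
              rw [hA1, runLegal]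
              have hgs2 : (c.stks ++ [[x]]).getD s [] = [x] := getD_append_len _ _ hlen.symm
              have hgs3 : (c.stks ++ [[x]]).getD (s-1) [] = c.stks.getD (s-1) [] :=
                getD_append_lt _ _ (by omega)
              have hL2 : legal (s+1) ⟨rest.take j' ++ n :: rest.drop j',
                  c.stks ++ [[x]], c.output⟩ s = true := by
                rw [legal, if_neg hm0, if_pos (by omega : s < s+1)]
                simp only [hgs2, hgs3]
                exact hleg
              rw [if_pos hL2]
              have hA2 : applyMove (s+1) ⟨rest.take j' ++ n :: rest.drop j',
                  c.stks ++ [[x]], c.output⟩ s =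
                  ⟨rest.take j' ++ n :: rest.drop j',
                    c.stks.set (s-1) (x :: c.stks.getD (s-1) []) ++ [[]], c.output⟩ := by
                rw [applyMove, if_neg hm0, if_pos (by omega : s < s+1)]
                simp only [hgs2, hgs3]
                rw [set_append_len _ _ _ hlen.symm, set_append_lt _ _ _ (by omega)]
              rw [hA2]
              exact hms'
          · exfalso
            rw [legal, if_neg hm0, if_neg hms, if_neg hmt] at hleg
            exact absurd hleg (by simp)

lemma flush (t n : ℕ) : ∀ (m : ℕ) (out : List ℕ), m < t → n = out.length + 1 →
    runLegal t ⟨[], (List.replicate t ([] : List ℕ)).set m [n], out⟩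
      ((List.range (m+1)).reverse) = some ⟨[], List.replicate t [], out ++ [n]⟩ := by
  intro m
  induction m with
  | zero =>
    intro out hm hn
    have hg : ((List.replicate t ([] : List ℕ)).set 0 [n]).getD 0 [] = [n] :=
      getD_set_self _ _ _ (by simpa using hm)
    rw [show (List.range 1).reverse = [0] from rfl, runLegal]
    have hL : legal t ⟨[], (List.replicate t ([] : List ℕ)).set 0 [n], out⟩ 0 = true := by
      rw [legal, if_pos rfl]
      simp only [hg]
      simp [hn]
    rw [if_pos hL, applyMove, if_pos rfl]
    simp only [hg]
    rw [List.set_set, set_replicate_nil, runLegal]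
  | succ m ihm =>
    intro out hm hn
    have hrev : (List.range (m+2)).reverse = (m+1) :: (List.range (m+1)).reverse := by
      rw [List.range_succ]
      simp
    rw [hrev, runLegal]
    have hg1 : ((List.replicate t ([] : List ℕ)).set (m+1) [n]).getD (m+1) [] = [n] :=
      getD_set_self _ _ _ (by simpa using hm)
    have hg2 : ((List.replicate t ([] : List ℕ)).set (m+1) [n]).getD m [] = [] := by
      rw [getD_set_ne _ _ (by omega), getD_replicate_nil]
    have hL : legal t ⟨[], (List.replicate t ([] : List ℕ)).set (m+1) [n], out⟩ (m+1)
        = true := by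
      rw [legal, if_neg (by omega), if_pos hm]
      simp only [hg1, Nat.add_sub_cancel, hg2, canPush]
    rw [if_pos hL, applyMove, if_neg (by omega), if_pos hm]
    simp only [hg1, Nat.add_sub_cancel, hg2]
    rw [List.set_set, set_replicate_nil]
    exact ihm out (by omega) hn

end StackAux

/-- If `p` (of length `n-1`) is sortable by `t-1` stacks in series by some algorithm,
inserting the value `n = p.length + 1` anywhere gives a permutation sortable by `t` stacks. -/
theorem stmt7 (t : ℕ) (ht : 1 ≤ t) (p : List ℕ) (hp : IsPermOf p.length p)
    (h : Sortable (t - 1) p) (i : ℕ) (hi : i ≤ p.length) :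
    Sortable t (p.take i ++ (p.length + 1) :: p.drop i) := by
  obtain ⟨ms, hms⟩ := h
  rcases Nat.lt_or_ge t 2 with ht2 | ht2
  · -- t = 1
    have ht1 : t = 1 := by omega
    subst ht1
    have hp0 : p = [] := by
      cases ms with
      | nil =>
        simp only [runLegal, Option.some.injEq, initConf, finalConf, Conf.mk.injEq] at hms
        exact hms.1
      | cons m ms =>
        rw [runLegal] at hms
        split at hms
        · exfalso
          rename_i hleg
          rw [legal] at hleg
          by_cases hm0 : m = 0
          · rw [if_pos hm0] at hleg
            simp [initConf] at hleg
          · rw [if_neg hm0, if_neg (by omega : ¬ m < 1 - 1), if_neg (by omega : ¬ m = 1 - 1)]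
              at hleg
            simp at hleg
        · exact absurd hms (by simp)
    subst hp0
    have hi0 : i = 0 := Nat.le_zero.mp hi
    subst hi0
    exact ⟨[1, 0], by decide⟩
  · obtain ⟨s, rfl⟩ : ∃ s, t = s + 1 := ⟨t - 1, by omega⟩
    have hs1 : 1 ≤ s := by omega
    rw [show s + 1 - 1 = s from rfl] at hms
    set n := p.length + 1 with hn
    have hlt : ∀ x ∈ p, x < n := by
      intro x hx
      have := (List.Perm.mem_iff hp).mp hx
      rw [List.mem_range'] at this
      obtain ⟨k, hk, rfl⟩ := this
      omega
    obtain ⟨ms1, h1⟩ := simBefore s n hs1 ms (initConf s p) (finalConf s p.length) i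
      (by simpa [initConf] using hi) (by simp [initConf]) (by simpa [initConf] using hlt)
      hms (by simp [finalConf])
    refine ⟨ms1 ++ (List.range (s+1)).reverse, ?_⟩
    have hinit : initConf (s+1) (p.take i ++ n :: p.drop i) =
        ⟨(initConf s p).input.take i ++ n :: (initConf s p).input.drop i,
          (initConf s p).stks ++ [[]], (initConf s p).output⟩ := by
      simp [initConf, List.replicate_succ']
    rw [hinit, runLegal_append, h1]
    have hconf : (⟨[], (finalConf s p.length).stks ++ [[n]],
        (finalConf s p.length).output⟩ : Conf) =
        ⟨[], (List.replicate (s+1) ([] : List ℕ)).set s [n], List.range' 1 p.length⟩ := by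
      simp only [finalConf, Conf.mk.injEq]
      refine ⟨by simp, ?_, by simp⟩
      rw [List.replicate_succ', set_append_len _ _ _ (by simp)]
    rw [hconf]
    simp only [Option.bind_some]
    rw [flush (s+1) n s (List.range' 1 p.length) (by omega) (by simp [hn])]
    congr 1
    simp only [finalConf, Conf.mk.injEq]
    refine ⟨by simp, by simp, ?_⟩
    have hlen : (p.take i ++ n :: p.drop i).length = p.length + 1 := by
      simp
      omega
    rw [hlen, List.range'_1_concat]
    congr 1
    simp [hn]
    omega
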